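/- For all integers m, n with 1 ≤ m ≤ n, one has R_m(m,n) ≤ 2^n · C(n,m) · (2^{−m}·C(m, ⌊m/2⌋))^{n−m}, where C(n,m) and C(m, ⌊m/2⌋) are binomial coefficients. -/

import Mathlib

open scoped Classical

noncomputable section

/-- The `{±1}`-vector in `ℝ^n` encoded by a Boolean vector. -/
def signVec {n : ℕ} (u : Fin n → Bool) : Fin n → ℝ := fun i => if u i then 1 else -1

/-- `v` is a `{±1}`-vector: all coordinates lie in `{-1, 1}`. -/
def IsPM {n : ℕ} (v : Fin n → ℝ) : Prop := ∀ i, v i = 1 ∨ v i = -1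

/-- The real span of the `{±1}`-vectors encoded by `W` contains a `{±1}`-vector different
from `±(W j)` for all `j`. -/
def KSOEvent {p n : ℕ} (W : Fin p → Fin n → Bool) : Prop :=
  ∃ x : Fin n → ℝ,
    x ∈ Submodule.span ℝ (Set.range fun j => signVec (W j)) ∧ IsPM x ∧
    ∀ j, x ≠ signVec (W j) ∧ x ≠ -signVec (W j)

/-- `ℙ(p, n)`: the probability that the real span of `p` uniformly random `{±1}`-vectors
in `ℝ^n` contains a `{±1}`-vector different from `±v_1, …, ±v_p`. -/
def probKSO (p n : ℕ) : ℝ :=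
  ((Finset.univ.filter fun W : Fin p → Fin n → Bool => KSOEvent W).card : ℝ) / 2 ^ (p * n)

/-- Some three of the vectors encoded by `W` have a real linear combination that is a
`{±1}`-vector different from `±` those three vectors. -/
def P3Event {p n : ℕ} (W : Fin p → Fin n → Bool) : Prop :=
  ∃ j₁ j₂ j₃ : Fin p, j₁ ≠ j₂ ∧ j₁ ≠ j₃ ∧ j₂ ≠ j₃ ∧
    ∃ a b c : ℝ, ∃ x : Fin n → ℝ,
      x = a • signVec (W j₁) + b • signVec (W j₂) + c • signVec (W j₃) ∧ IsPM x ∧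
      (x ≠ signVec (W j₁) ∧ x ≠ -signVec (W j₁)) ∧
      (x ≠ signVec (W j₂) ∧ x ≠ -signVec (W j₂)) ∧
      (x ≠ signVec (W j₃) ∧ x ≠ -signVec (W j₃))

/-- `ℙ₃(p, n)`: the probability of `P3Event` for `p` uniformly random `{±1}`-vectors in `ℝ^n`. -/
def probP3 (p n : ℕ) : ℝ :=
  ((Finset.univ.filter fun W : Fin p → Fin n → Bool => P3Event W).card : ℝ) / 2 ^ (p * n)

/-- Some `m` of the vectors encoded by `W` have a linear combination with all coefficients
nonzero that is a `{±1}`-vector. -/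
def PmEvent (m : ℕ) {p n : ℕ} (W : Fin p → Fin n → Bool) : Prop :=
  ∃ j : Fin m → Fin p, Function.Injective j ∧
    ∃ α : Fin m → ℝ, (∀ i, α i ≠ 0) ∧ IsPM (∑ i, α i • signVec (W (j i)))

/-- `ℙ_m(p, n)`: the probability of `PmEvent m` for `p` uniformly random `{±1}`-vectors
in `ℝ^n`. -/
def probPm (m p n : ℕ) : ℝ :=
  ((Finset.univ.filter fun W : Fin p → Fin n → Bool => PmEvent m W).card : ℝ) / 2 ^ (p * n)

/-- `𝓜_m(p, n)`: the set of `p × n` `{±1}`-matrices (encoded row-wise by Booleans) with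
linearly independent rows, some `m` of which have a linear combination with nonzero
coefficients that is a `{±1}`-vector. -/
def MmSet (m p n : ℕ) : Finset (Fin p → Fin n → Bool) :=
  Finset.univ.filter fun M =>
    (LinearIndependent ℝ fun i => signVec (M i)) ∧ PmEvent m M

/-- `R_m(p, n) = |𝓜_m(p, n)| / 2^(p n)`. -/
def Rm (m p n : ℕ) : ℝ := ((MmSet m p n).card : ℝ) / 2 ^ (p * n)

/-- `ℙ_{p,n}`: the probability that a uniformly random `p × n` `{±1}`-matrix has rank
less than `p`, i.e. its rows are linearly dependent over `ℝ`. -/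
def probSingular (p n : ℕ) : ℝ :=
  ((Finset.univ.filter fun M : Fin p → Fin n → Bool =>
      ¬ LinearIndependent ℝ fun i => signVec (M i)).card : ℝ) / 2 ^ (p * n)

/-- The vector `(1, b_1, …, b_n) ∈ E_n ⊂ ℝ^{n+1}` encoded by a Boolean vector. -/
def eVec {n : ℕ} (u : Fin n → Bool) : Fin (n + 1) → ℝ := Fin.cons 1 (signVec u)

/-- The number of ordered `n`-tuples of distinct, linearly independent vectors from `E_n`
whose real span contains a `{±1}`-vector of `ℝ^{n+1}` different from `±w_1, …, ±w_n`. -/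
def KSOECard (n : ℕ) : ℕ :=
  (Finset.univ.filter fun W : Fin n → (Fin n → Bool) =>
    Function.Injective W ∧ (LinearIndependent ℝ fun i => eVec (W i)) ∧
    ∃ x : Fin (n + 1) → ℝ,
      x ∈ Submodule.span ℝ (Set.range fun i => eVec (W i)) ∧ IsPM x ∧
      ∀ i, x ≠ eVec (W i) ∧ x ≠ -eVec (W i)).card

/-- `P(2, n)`: the number of threshold functions of `n` variables. -/
def numThreshold (n : ℕ) : ℕ :=
  (Finset.univ.filter fun f : (Fin n → Bool) → Bool =>
    ∃ a : ℝ, ∃ w : Fin n → ℝ,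
      ∀ x, f x = true ↔ 0 < a + ∑ i, w i * signVec x i).card

def dotb {m : ℕ} (α : Fin m → ℝ) (c : Fin m → Bool) : ℝ := ∑ i, α i * signVec c i

def encF {m : ℕ} (c : Fin m → Bool) : Finset (Fin m) :=
  Finset.univ.filter (fun i => c i = true)

lemma enc_inj {m : ℕ} : Function.Injective (encF (m := m)) := by
  intro c c' h
  simp only [encF] at h
  funext i
  have := Finset.ext_iff.1 h i
  simp only [Finset.mem_filter, Finset.mem_univ, true_and] at this
  cases hc : c i <;> cases hc' : c' i <;> simp_all

lemma LO_pos {m : ℕ} (β : Fin m → ℝ) (hβ : ∀ i, 0 < β i) (t : ℝ) :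
    (Finset.univ.filter fun c : Fin m → Bool => dotb β c = t).card ≤ m.choose (m / 2) := by
  classical
  set enc : (Fin m → Bool) → Finset (Fin m) := encF with henc
  have hval : ∀ c : Fin m → Bool, dotb β c = ∑ i, β i * (if i ∈ enc c then 1 else -1) := by
    intro c
    refine Finset.sum_congr rfl fun i _ => ?_
    simp [henc, encF, signVec]
  set 𝒜 := (Finset.univ.filter fun c : Fin m → Bool => dotb β c = t).image enc with hA
  have hanti : IsAntichain (· ⊆ ·) (𝒜 : Set (Finset (Fin m))) := by
    intro S hS T hT hne hsub
    simp only [hA, Finset.coe_image, Set.mem_image, Finset.mem_coe, Finset.mem_filter] at hS hT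
    obtain ⟨c, ⟨-, hc⟩, rfl⟩ := hS
    obtain ⟨c', ⟨-, hc'⟩, rfl⟩ := hT
    have hlt : (∑ i, β i * (if i ∈ enc c then 1 else -1)) <
        ∑ i, β i * (if i ∈ enc c' then 1 else -1) := by
      have hex : ∃ i₀ ∈ enc c', i₀ ∉ enc c := by
        by_contra hcon
        push_neg at hcon
        exact (hne (congrArg _ (enc_inj (Finset.Subset.antisymm hsub hcon)))).elim
      obtain ⟨i₀, hi₀T, hi₀S⟩ := hex
      refine Finset.sum_lt_sum (fun i _ => ?_) ⟨i₀, Finset.mem_univ i₀, ?_⟩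
      · by_cases hiS : i ∈ enc c
        · simp [hiS, hsub hiS]
        · have := (hβ i).le
          by_cases hiT : i ∈ enc c' <;> simp [hiS, hiT] <;> nlinarith [hβ i]
      · simp only [hi₀S, hi₀T, if_true, if_false, if_neg, mul_one, mul_neg_one]
        nlinarith [hβ i₀]
    rw [← hval, ← hval, hc, hc'] at hlt
    exact lt_irrefl _ hlt
  have hcard := IsAntichain.sperner hanti
  rwa [hA, Finset.card_image_of_injective _ enc_inj, Fintype.card_fin] at hcard

lemma LO {m : ℕ} (α : Fin m → ℝ) (hα : ∀ i, α i ≠ 0) (t : ℝ) :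
    (Finset.univ.filter fun c : Fin m → Bool => dotb α c = t).card ≤ m.choose (m / 2) := by
  classical
  set σ : (Fin m → Bool) → (Fin m → Bool) := fun c i => if 0 < α i then c i else !(c i) with hσ
  have hσσ : ∀ c, σ (σ c) = c := by
    intro c; funext i; by_cases h : 0 < α i <;> simp [hσ, h]
  have hdot : ∀ c, dotb (fun i => |α i|) (σ c) = dotb α c := by
    intro c
    refine Finset.sum_congr rfl fun i _ => ?_
    dsimp only
    by_cases h : 0 < α i
    · simp [hσ, signVec, h, abs_of_pos h]
    · have hneg : α i < 0 := lt_of_le_of_ne (not_lt.1 h) (hα i)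
      cases hc : c i <;> simp [hσ, signVec, h, hc, abs_of_neg hneg] <;> ring
  have hcardeq : (Finset.univ.filter fun c : Fin m → Bool => dotb α c = t).card =
      (Finset.univ.filter fun c : Fin m → Bool => dotb (fun i => |α i|) c = t).card := by
    refine Finset.card_bij' (fun c _ => σ c) (fun c _ => σ c) ?_ ?_ ?_ ?_
    · intro c hc
      simp only [Finset.mem_filter, Finset.mem_univ, true_and] at hc ⊢
      rw [hdot c]; exact hc
    · intro c hc
      simp only [Finset.mem_filter, Finset.mem_univ, true_and] at hc ⊢
      have h2 := hdot (σ c); rw [hσσ c] at h2; rw [← h2]; exact hc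
    · intro c _; exact hσσ c
    · intro c _; exact hσσ c
  rw [hcardeq]
  exact LO_pos _ (fun i => abs_pos.2 (hα i)) t

def Bad {m : ℕ} (α : Fin m → ℝ) : Finset (Fin m → Bool) :=
  Finset.univ.filter fun c => dotb α c = 1 ∨ dotb α c = -1

lemma Bad_card {m : ℕ} (α : Fin m → ℝ) (hα : ∀ i, α i ≠ 0) :
    (Bad α).card ≤ 2 * m.choose (m / 2) := by
  classical
  rw [Bad, Finset.filter_or]
  calc _ ≤ (Finset.univ.filter fun c : Fin m → Bool => dotb α c = 1).card
        + (Finset.univ.filter fun c : Fin m → Bool => dotb α c = -1).card :=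
      Finset.card_union_le _ _
    _ ≤ m.choose (m / 2) + m.choose (m / 2) := add_le_add (LO α hα 1) (LO α hα (-1))
    _ = 2 * m.choose (m / 2) := (two_mul _).symm

lemma dot_inj {m : ℕ} {s : Set (Fin m → ℝ)} (hspan : ⊤ ≤ Submodule.span ℝ s)
    {α β : Fin m → ℝ} (h : ∀ v ∈ s, ∑ i, α i * v i = ∑ i, β i * v i) : α = β := by
  classical
  set δ : Fin m → ℝ := fun i => α i - β i with hδ
  let φ : (Fin m → ℝ) →ₗ[ℝ] ℝ :=
    { toFun := fun v => ∑ i, δ i * v i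
      map_add' := fun v w => by simp [mul_add, Finset.sum_add_distrib]
      map_smul' := fun r v => by
        simp only [smul_eq_mul, RingHom.id_apply, Finset.mul_sum, Pi.smul_apply]
        exact Finset.sum_congr rfl fun i _ => by ring }
  have hker : s ⊆ ↑(LinearMap.ker φ) := by
    intro v hv
    have := h v hv
    simp only [SetLike.mem_coe, LinearMap.mem_ker]
    show (∑ i, δ i * v i) = 0
    simp only [hδ, sub_mul, Finset.sum_sub_distrib]
    linarith
  have htop : (⊤ : Submodule ℝ (Fin m → ℝ)) ≤ LinearMap.ker φ :=
    le_trans hspan ((Submodule.span_le).2 hker)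
  have hδ0 : (∑ i, δ i * δ i) = 0 := htop (Submodule.mem_top (x := δ))
  have hall : ∀ i ∈ Finset.univ, δ i * δ i = 0 := by
    intro i _
    have hnn : ∀ j ∈ (Finset.univ : Finset (Fin m)), 0 ≤ δ j * δ j :=
      fun j _ => mul_self_nonneg _
    exact (Finset.sum_eq_zero_iff_of_nonneg hnn).1 hδ0 i (Finset.mem_univ i)
  funext i
  have := mul_self_eq_zero.1 (hall i (Finset.mem_univ i))
  have : α i - β i = 0 := this
  linarith

lemma exists_pivot {m n : ℕ} (hm : 1 ≤ m) (hmn : m ≤ n) (col : Fin n → (Fin m → ℝ))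
    (hrank : Submodule.span ℝ (Set.range col) = ⊤) :
    ∃ S : Finset (Fin n), S.card = m ∧ ⊤ ≤ Submodule.span ℝ (col '' ↑S) := by
  classical
  obtain ⟨b, hbsub, hbspan, hbind⟩ := exists_linearIndependent ℝ (Set.range col)
  rw [hrank] at hbspan
  have hfin : b.Finite := hbind.setFinite
  haveI := hfin.fintype
  have hcardb : b.toFinset.card = m := by
    have h1 := finrank_span_set_eq_card hbind
    rw [hbspan, finrank_top] at h1
    rw [← h1, Module.finrank_pi, Fintype.card_fin]
  set f : (Fin m → ℝ) → Fin n := fun v =>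
    if h : ∃ j, col j = v then h.choose else ⟨0, lt_of_lt_of_le hm hmn⟩ with hf
  have hcolf : ∀ v ∈ b, col (f v) = v := by
    intro v hv
    have hv' : ∃ j, col j = v := hbsub hv
    simp only [hf, dif_pos hv']
    exact hv'.choose_spec
  refine ⟨b.toFinset.image f, ?_, ?_⟩
  · rw [Finset.card_image_of_injOn, hcardb]
    intro v hv w hw hvw
    rw [← hcolf v (Set.mem_toFinset.1 hv), ← hcolf w (Set.mem_toFinset.1 hw), hvw]
  · rw [← hbspan]
    refine Submodule.span_mono ?_
    intro v hv
    refine ⟨f v, ?_, hcolf v hv⟩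
    simp only [Finset.coe_image, Set.mem_image]
    exact ⟨v, by simpa using Set.mem_toFinset.2 hv, rfl⟩

def colR {m n : ℕ} (M : Fin m → Fin n → Bool) : Fin n → (Fin m → ℝ) :=
  fun j i => signVec (M i) j

lemma span_cols_top {m n : ℕ} (M : Fin m → Fin n → Bool)
    (h : LinearIndependent ℝ fun i => signVec (M i)) :
    Submodule.span ℝ (Set.range (colR M)) = ⊤ := by
  classical
  have hrank : Matrix.rank (fun i => signVec (M i) : Matrix (Fin m) (Fin n) ℝ) = Fintype.card (Fin m) :=
    LinearIndependent.rank_matrix h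
  rw [Fintype.card_fin] at hrank
  have h2 := Matrix.rank_eq_finrank_span_cols (R := ℝ) (fun i => signVec (M i))
  have hrange : Set.range (Matrix.col fun i => signVec (M i))
      = Set.range (colR M) := rfl
  rw [hrange] at h2
  apply Submodule.eq_top_of_finrank_eq
  rw [← h2, hrank, Module.finrank_pi, Fintype.card_fin]

def colsB {m n : ℕ} (M : Fin m → Fin n → Bool) (j : Fin n) : Fin m → Bool := fun i => M i j

lemma sum_apply_dotb {m n : ℕ} (M : Fin m → Fin n → Bool) (α : Fin m → ℝ) (j : Fin n) :
    (∑ k, α k • signVec (M k)) j = dotb α (colsB M j) := by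
  simp [dotb, Finset.sum_apply, signVec, colsB]
  exact Finset.sum_congr rfl fun i _ => by rcases Bool.eq_false_or_eq_true (M i j) with h | h <;> simp [h]

lemma fiber_card {m n : ℕ} (S : Finset (Fin n)) (hS : S.card = m)
    (α : Fin m → ℝ) (A : Fin m → Fin n → Bool) :
    (Finset.univ.filter fun M : Fin m → Fin n → Bool =>
      (∀ i, ∀ j ∈ S, M i j = A i j) ∧ ∀ j ∉ S, colsB M j ∈ Bad α).card
    ≤ (Bad α).card ^ (n - m) := by
  classical
  set t : Finset ({j : Fin n // j ∉ S} → (Fin m → Bool)) :=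
    Fintype.piFinset (fun _ => Bad α) with ht
  have hcardt : t.card = (Bad α).card ^ (n - m) := by
    rw [ht, Fintype.card_piFinset]
    rw [Finset.prod_const]
    congr 1
    rw [Finset.card_univ, Fintype.card_subtype]
    have : Finset.univ.filter (fun j : Fin n => j ∉ S) = Sᶜ := by
      ext j; simp
    rw [this, Finset.card_compl, hS, Fintype.card_fin]
  rw [← hcardt]
  refine Finset.card_le_card_of_injOn
    (fun M => fun j => colsB M j.1) ?_ ?_
  · intro M hM
    simp only [Finset.mem_coe, Finset.mem_filter, Finset.mem_univ, true_and] at hM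
    rw [Finset.mem_coe, ht, Fintype.mem_piFinset]
    exact fun j => hM.2 j.1 j.2
  · intro M hM M' hM' hMM'
    simp only [Finset.mem_coe, Finset.mem_filter, Finset.mem_univ, true_and] at hM hM'
    funext i j
    by_cases hj : j ∈ S
    · rw [hM.1 i j hj, hM'.1 i j hj]
    · have := congrFun hMM' ⟨j, hj⟩
      exact congrFun this i

lemma GS_card {m n : ℕ} (hmn : m ≤ n) (S : Finset (Fin n)) (hS : S.card = m) :
    (Finset.univ.filter fun M : Fin m → Fin n → Bool =>
      (⊤ ≤ Submodule.span ℝ (colR M '' ↑S)) ∧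
      ∃ α : Fin m → ℝ, (∀ i, α i ≠ 0) ∧ IsPM (∑ k, α k • signVec (M k))).card
    ≤ 2 ^ (m * m) * 2 ^ m * (2 * m.choose (m / 2)) ^ (n - m) := by
  classical
  set P : (Fin m → Fin n → Bool) → Prop := fun M =>
    ∃ α : Fin m → ℝ, (∀ i, α i ≠ 0) ∧ IsPM (∑ k, α k • signVec (M k)) with hP
  set wit : (Fin m → Fin n → Bool) → (Fin m → ℝ) := fun M =>
    if h : P M then h.choose else 0 with hwit
  have hwit_spec : ∀ M, P M → (∀ i, wit M i ≠ 0) ∧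
      IsPM (∑ k, wit M k • signVec (M k)) := by
    intro M h
    have : wit M = h.choose := dif_pos h
    rw [this]
    exact h.choose_spec
  set G := Finset.univ.filter fun M : Fin m → Fin n → Bool =>
      (⊤ ≤ Submodule.span ℝ (colR M '' ↑S)) ∧ P M with hG
  set σ : (Fin m → Fin n → Bool) →
      ((Fin m → {j // j ∈ S} → Bool) × ({j // j ∈ S} → Bool)) := fun M =>
    (fun i j => M i j.1,
     fun j => if 0 < (∑ k, wit M k • signVec (M k)) j.1 then true else false) with hσ
  have hfib := Finset.card_eq_sum_card_fiberwise
    (f := σ) (s := G) (t := Finset.univ) (fun x _ => Finset.mem_univ _)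
  have hbound : ∀ b, (G.filter fun M => σ M = b).card ≤ (2 * m.choose (m / 2)) ^ (n - m) := by
    intro b
    rcases Finset.eq_empty_or_nonempty (G.filter fun M => σ M = b) with he | ⟨M₀, hM₀⟩
    · simp [he]
    · simp only [Finset.mem_filter, hG, Finset.mem_univ, true_and] at hM₀
      obtain ⟨⟨hspan₀, hP₀⟩, hσ₀⟩ := hM₀
      set α₀ := wit M₀ with hα₀
      obtain ⟨hα₀ne, hα₀pm⟩ := hwit_spec M₀ hP₀
      calc (G.filter fun M => σ M = b).card
          ≤ (Finset.univ.filter fun M : Fin m → Fin n → Bool =>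
              (∀ i, ∀ j ∈ S, M i j = M₀ i j) ∧ ∀ j ∉ S, colsB M j ∈ Bad α₀).card := by
            apply Finset.card_le_card
            intro M hM
            simp only [Finset.mem_filter, hG, Finset.mem_univ, true_and] at hM ⊢
            obtain ⟨⟨hspanM, hPM⟩, hσM⟩ := hM
            have hσeq : σ M = σ M₀ := hσM.trans hσ₀.symm
            have hAeq : ∀ i, ∀ j ∈ S, M i j = M₀ i j := by
              intro i j hj
              have := congrFun (congrFun (congrArg Prod.fst hσeq) i) ⟨j, hj⟩
              exact this
            obtain ⟨hαMne, hαMpm⟩ := hwit_spec M hPM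
            set αM := wit M with hαM
            set xM := ∑ k, αM k • signVec (M k) with hxM
            set x₀ := ∑ k, α₀ k • signVec (M₀ k) with hx₀
            have hxeq : ∀ j ∈ S, xM j = x₀ j := by
              intro j hj
              have hb := congrFun (congrArg Prod.snd hσeq) ⟨j, hj⟩
              simp only [hσ] at hb
              rcases hαMpm j with h1 | h1 <;> rcases hα₀pm j with h2 | h2 <;>
                rw [← hxM, ← hx₀] at * <;> rw [h1, h2] at hb ⊢ <;> norm_num at hb
            have hcols : ∀ j ∈ S, colsB M j = colsB M₀ j := by
              intro j hj
              funext i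
              exact hAeq i j hj
            have hαeq : αM = α₀ := by
              apply dot_inj hspan₀
              rintro v ⟨j, hj, rfl⟩
              have hj' : j ∈ S := Finset.mem_coe.1 hj
              calc (∑ i, αM i * colR M₀ j i) = dotb αM (colsB M₀ j) := rfl
                _ = dotb αM (colsB M j) := by rw [hcols j hj']
                _ = xM j := (sum_apply_dotb M αM j).symm
                _ = x₀ j := hxeq j hj'
                _ = dotb α₀ (colsB M₀ j) := sum_apply_dotb M₀ α₀ j
                _ = ∑ i, α₀ i * colR M₀ j i := rfl
            refine ⟨hAeq, fun j hj => ?_⟩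
            simp only [Bad, Finset.mem_filter, Finset.mem_univ, true_and]
            rw [← hαeq, ← sum_apply_dotb]
            exact hαMpm j
        _ ≤ (Bad α₀).card ^ (n - m) := fiber_card S hS α₀ M₀
        _ ≤ (2 * m.choose (m / 2)) ^ (n - m) :=
            Nat.pow_le_pow_left (Bad_card α₀ hα₀ne) _
  calc G.card = ∑ b ∈ Finset.univ, (G.filter fun M => σ M = b).card := hfib
    _ ≤ ∑ _b ∈ (Finset.univ : Finset ((Fin m → {j // j ∈ S} → Bool) × ({j // j ∈ S} → Bool))),
        (2 * m.choose (m / 2)) ^ (n - m) := Finset.sum_le_sum fun b _ => hbound b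
    _ = 2 ^ (m * m) * 2 ^ m * (2 * m.choose (m / 2)) ^ (n - m) := by
        rw [Finset.sum_const, Finset.card_univ, smul_eq_mul]
        congr 1
        rw [Fintype.card_prod, Fintype.card_fun, Fintype.card_fun,
          Fintype.card_bool, Fintype.card_coe, hS, Fintype.card_fin, ← pow_mul]

lemma pm_canonical {m n : ℕ} (M : Fin m → Fin n → Bool) (h : PmEvent m M) :
    ∃ α : Fin m → ℝ, (∀ i, α i ≠ 0) ∧ IsPM (∑ k, α k • signVec (M k)) := by
  obtain ⟨j, hj, α, hα, hpm⟩ := h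
  have hbij : Function.Bijective j := (Finite.injective_iff_bijective).1 hj
  set e := Equiv.ofBijective j hbij with he
  refine ⟨fun k => α (e.symm k), fun k => hα _, ?_⟩
  have hsum : (∑ k, α (e.symm k) • signVec (M k)) = ∑ i, α i • signVec (M (j i)) := by
    rw [← Equiv.sum_comp e (fun k => α (e.symm k) • signVec (M k))]
    refine Finset.sum_congr rfl fun i _ => ?_
    simp [he, Equiv.ofBijective_apply]
  rw [hsum]; exact hpm

lemma main_card_bound (m e : ℕ) (hm : 1 ≤ m) :
    (MmSet m m (m + e)).card ≤
      (m + e).choose m * (2 ^ (m * m) * 2 ^ m * (2 * m.choose (m / 2)) ^ e) := by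
  classical
  have hmn : m ≤ m + e := Nat.le_add_right m e
  have hsub : MmSet m m (m + e) ⊆
      (Finset.powersetCard m (Finset.univ : Finset (Fin (m + e)))).biUnion
      (fun S => Finset.univ.filter fun M : Fin m → Fin (m + e) → Bool =>
        (⊤ ≤ Submodule.span ℝ (colR M '' ↑S)) ∧
        ∃ α : Fin m → ℝ, (∀ i, α i ≠ 0) ∧ IsPM (∑ k, α k • signVec (M k))) := by
    intro M hM
    rw [MmSet, Finset.mem_filter] at hM
    obtain ⟨-, hLI, hPm⟩ := hM
    obtain ⟨S, hScard, hSspan⟩ := exists_pivot hm hmn (colR M) (span_cols_top M hLI)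
    rw [Finset.mem_biUnion]
    exact ⟨S, Finset.mem_powersetCard_univ.2 hScard,
      Finset.mem_filter.2 ⟨Finset.mem_univ _, hSspan, pm_canonical M hPm⟩⟩
  calc (MmSet m m (m + e)).card
      ≤ _ := Finset.card_le_card hsub
    _ ≤ ∑ S ∈ Finset.powersetCard m (Finset.univ : Finset (Fin (m + e))),
        (Finset.univ.filter fun M : Fin m → Fin (m + e) → Bool =>
          (⊤ ≤ Submodule.span ℝ (colR M '' ↑S)) ∧
          ∃ α : Fin m → ℝ, (∀ i, α i ≠ 0) ∧ IsPM (∑ k, α k • signVec (M k))).card :=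
        Finset.card_biUnion_le
    _ ≤ ∑ _S ∈ Finset.powersetCard m (Finset.univ : Finset (Fin (m + e))),
        (2 ^ (m * m) * 2 ^ m * (2 * m.choose (m / 2)) ^ e) := by
        refine Finset.sum_le_sum fun S hS => ?_
        have h := GS_card hmn S (Finset.mem_powersetCard_univ.1 hS)
        rwa [Nat.add_sub_cancel_left] at h
    _ = (m + e).choose m * (2 ^ (m * m) * 2 ^ m * (2 * m.choose (m / 2)) ^ e) := by
        rw [Finset.sum_const, smul_eq_mul, Finset.card_powersetCard,
          Finset.card_univ, Fintype.card_fin]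

theorem stmt11 (m n : ℕ) (hm : 1 ≤ m) (hmn : m ≤ n) :
    Rm m m n ≤
      2 ^ n * (n.choose m : ℝ) * ((m.choose (m / 2) : ℝ) / 2 ^ m) ^ (n - m) := by
  classical
  obtain ⟨e, rfl⟩ : ∃ e, n = m + e := ⟨n - m, (Nat.add_sub_cancel' hmn).symm⟩
  rw [show m + e - m = e from Nat.add_sub_cancel_left m e]
  rw [Rm]
  have h2 : (0 : ℝ) < 2 ^ (m * (m + e)) := by positivity
  rw [div_le_iff₀ h2]
  calc ((MmSet m m (m + e)).card : ℝ)
      ≤ (((m + e).choose m * (2 ^ (m * m) * 2 ^ m * (2 * m.choose (m / 2)) ^ e) : ℕ) : ℝ) := by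
        exact_mod_cast main_card_bound m e hm
    _ = 2 ^ (m + e) * ((m + e).choose m : ℝ) * ((m.choose (m / 2) : ℝ) / 2 ^ m) ^ e *
        2 ^ (m * (m + e)) := by
        push_cast
        rw [mul_pow, div_pow, ← pow_mul]
        have h2e : ((2 : ℝ) ^ (m * e)) ≠ 0 := by positivity
        field_simp
        have hpow : (2 : ℝ) ^ (m * m) * 2 ^ m * 2 ^ e * 2 ^ (m * e)
            = 2 ^ (m + e) * 2 ^ (m * (m + e)) := by
          rw [← pow_add, ← pow_add, ← pow_add, ← pow_add]
          congr 1
          ring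
        linear_combination (((m + e).choose m : ℝ) * ((m.choose (m / 2) : ℝ)) ^ e) * hpow
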